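/- Let ε, δ > 0 and let M : 𝒴 → 𝒪 be a randomized algorithm such that for every pair of adjacent inputs, with probability at least 1 − γ ≥ 1/2 over an independent internal random event B of M, the algorithm conditioned on B is (ε, δ)-differentially private. Then M is (ε + 2γ, δ + γ)-differentially private. -/

import Mathlib

open MeasureTheory ENNReal

/-- If a randomized algorithm `M`, conditioned on an internal event `B` of
probability at least `1 - γ ≥ 1/2` (independent of the input), is
`(ε, δ)`-differentially private, then `M` is `(ε + 2γ, δ + γ)`-differentially
private. -/
theorem stmt_11 {Y O Ω : Type*} [MeasurableSpace Ω]
    (Adj : Y → Y → Prop) (M : Y → Ω → O)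
    (P : Measure Ω) [IsProbabilityMeasure P]
    (ε δ γ : ℝ) (hε : 0 < ε) (hδ : 0 < δ) (hγ : 0 ≤ γ) (hγ2 : γ ≤ 1 / 2)
    (B : Set Ω) (hBmeas : MeasurableSet B) (hB : 1 - γ ≤ (P B).toReal)
    (hDP : ∀ y y', Adj y y' → ∀ S : Set O,
      (ProbabilityTheory.cond P B) {ω | M y ω ∈ S}
        ≤ ENNReal.ofReal (Real.exp ε) * (ProbabilityTheory.cond P B) {ω | M y' ω ∈ S}
          + ENNReal.ofReal δ) :
    ∀ y y', Adj y y' → ∀ S : Set O,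
      P {ω | M y ω ∈ S}
        ≤ ENNReal.ofReal (Real.exp (ε + 2 * γ)) * P {ω | M y' ω ∈ S}
          + ENNReal.ofReal (δ + γ) := by
  intro y y' hadj S
  set A := {ω | M y ω ∈ S}
  set A' := {ω | M y' ω ∈ S}
  have hPBtop : P B ≠ ⊤ := measure_ne_top P B
  have hPB0 : P B ≠ 0 := by
    intro h
    rw [h] at hB
    simp at hB
    linarith
  have hcond : ∀ T : Set Ω, P B * ProbabilityTheory.cond P B T = P (B ∩ T) := by
    intro T
    rw [ProbabilityTheory.cond_apply hBmeas, ← mul_assoc, ENNReal.mul_inv_cancel hPB0 hPBtop,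
      one_mul]
  -- step 1: P A ≤ P (B ∩ A) + P Bᶜ
  have h1 : P A ≤ P (B ∩ A) + P Bᶜ := by
    calc P A ≤ P ((B ∩ A) ∪ Bᶜ) := by
          apply measure_mono
          intro ω hω
          by_cases hb : ω ∈ B
          · exact Or.inl ⟨hb, hω⟩
          · exact Or.inr hb
      _ ≤ P (B ∩ A) + P Bᶜ := measure_union_le _ _
  -- step 2: P (B ∩ A) ≤ e^ε * P A' + δ
  have h2 : P (B ∩ A) ≤ ENNReal.ofReal (Real.exp ε) * P A' + ENNReal.ofReal δ := by
    rw [← hcond A]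
    calc P B * ProbabilityTheory.cond P B A
        ≤ P B * (ENNReal.ofReal (Real.exp ε) * ProbabilityTheory.cond P B A'
            + ENNReal.ofReal δ) := by
          exact mul_le_mul_right (hDP y y' hadj S) _
      _ = ENNReal.ofReal (Real.exp ε) * (P B * ProbabilityTheory.cond P B A')
            + P B * ENNReal.ofReal δ := by ring
      _ ≤ ENNReal.ofReal (Real.exp ε) * P A' + ENNReal.ofReal δ := by
          refine add_le_add (mul_le_mul_right ?_ _) ?_
          · rw [hcond A']
            exact measure_mono Set.inter_subset_right
          · exact mul_le_of_le_one_left zero_le prob_le_one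
  -- step 3: P Bᶜ ≤ γ
  have h3 : P Bᶜ ≤ ENNReal.ofReal γ := by
    have hPBge : ENNReal.ofReal (1 - γ) ≤ P B := by
      rw [← ENNReal.ofReal_toReal hPBtop]
      exact ENNReal.ofReal_le_ofReal hB
    have hcompl : P Bᶜ = 1 - P B := prob_compl_eq_one_sub hBmeas
    rw [hcompl]
    have : (1 : ℝ≥0∞) = ENNReal.ofReal (1 - γ) + ENNReal.ofReal γ := by
      rw [← ENNReal.ofReal_add (by linarith) hγ]
      norm_num
    rw [this]
    calc ENNReal.ofReal (1 - γ) + ENNReal.ofReal γ - P B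
        ≤ ENNReal.ofReal (1 - γ) + ENNReal.ofReal γ - ENNReal.ofReal (1 - γ) :=
          tsub_le_tsub_left hPBge _
      _ = ENNReal.ofReal γ := by
          rw [add_comm, ENNReal.add_sub_cancel_right ENNReal.ofReal_ne_top]
  -- combine
  calc P A ≤ (ENNReal.ofReal (Real.exp ε) * P A' + ENNReal.ofReal δ) + ENNReal.ofReal γ :=
        le_trans h1 (add_le_add h2 h3)
    _ = ENNReal.ofReal (Real.exp ε) * P A' + ENNReal.ofReal (δ + γ) := by
        rw [add_assoc, ENNReal.ofReal_add hδ.le hγ]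
    _ ≤ ENNReal.ofReal (Real.exp (ε + 2 * γ)) * P A' + ENNReal.ofReal (δ + γ) := by
        exact add_le_add_left (mul_le_mul_left
          (ENNReal.ofReal_le_ofReal (Real.exp_le_exp.2 (by linarith))) _) _
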